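/- Let A be a compact Hausdorff second-countable abelian group with normalized Haar probability measure μ, let B ≤ A be a closed subgroup with normalized Haar probability measure ν, let ε > 0, and let f : A → ℂ be a Borel measurable function with ‖f‖_∞ ≤ 1. Define f_B(z) = ∫_B f(z+y) dν(y). Then there exist a natural number n ≤ 1 + 4/ε² and elements a₁,…,a_n ∈ B such that the function g(z) = (1/n)·∑_{i=1}^n f(z + a_i) satisfies ‖f_B − g‖_{L²(μ)} ≤ ε. -/

import Mathlib

open MeasureTheory
open scoped BigOperators
open scoped ENNReal

/-- averaging over a closed subgroup `B` of a compact abelian group `A` can be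
approximated in `L²` by an average of at most `1 + 4/ε²` translates: for `f : A → ℂ` with
`‖f‖_∞ ≤ 1` and `f_B(z) = ∫_B f(z+y) dν(y)` there are `a₁,…,a_n ∈ B`, `n ≤ 1 + 4/ε²`, with
`‖f_B − (1/n)∑ f(·+aᵢ)‖_{L²(μ)} ≤ ε`. -/
theorem subgroup_average_approx
    {A : Type*} [AddCommGroup A] [TopologicalSpace A] [IsTopologicalAddGroup A]
    [CompactSpace A] [T2Space A] [SecondCountableTopology A]
    [MeasurableSpace A] [BorelSpace A]
    (μ : Measure A) [μ.IsAddHaarMeasure] [IsProbabilityMeasure μ]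
    (B : AddSubgroup A) (hB : IsClosed (B : Set A))
    (ν : Measure B) [ν.IsAddHaarMeasure] [IsProbabilityMeasure ν]
    (ε : ℝ) (hε : 0 < ε)
    (f : A → ℂ) (hf : Measurable f) (hbd : ∀ x, ‖f x‖ ≤ 1) :
    ∃ n : ℕ, 0 < n ∧ (n : ℝ) ≤ 1 + 4 / ε ^ 2 ∧
      ∃ a : Fin n → B,
        eLpNorm (fun z => (∫ y : B, f (z + (y : A)) ∂ν) -
            (1 / n : ℂ) * ∑ i, f (z + (a i : A))) 2 μ
          ≤ ENNReal.ofReal ε := by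
  classical
  have hcoe : Measurable (fun y : B => (y : A)) := measurable_subtype_coe
  -- `fB` is the average of `f` over `B`
  set fB : A → ℂ := fun z => ∫ y : B, f (z + (y : A)) ∂ν with hfBdef
  have hprod : Measurable (fun p : A × B => f (p.1 + (p.2 : A))) :=
    hf.comp (measurable_fst.add (hcoe.comp measurable_snd))
  have hfBm : Measurable fB := by
    have := MeasureTheory.StronglyMeasurable.integral_prod_right' (ν := ν)
      hprod.stronglyMeasurable
    exact this.measurable
  have hfBbd : ∀ z, ‖fB z‖ ≤ 1 := by
    intro z
    calc ‖fB z‖ ≤ ∫ y : B, ‖f (z + (y:A))‖ ∂ν := norm_integral_le_integral_norm _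
      _ ≤ ∫ (_ : B), 1 ∂ν :=
          integral_mono_of_nonneg (Filter.Eventually.of_forall fun _ => norm_nonneg _)
            (integrable_const 1) (Filter.Eventually.of_forall fun y => hbd _)
      _ = 1 := by simp
  -- the recentred translate
  set h : B → A → ℂ := fun b z => f (z + (b : A)) - fB z with hhdef
  have hhm : ∀ b, Measurable (h b) :=
    fun b => (hf.comp (measurable_id.add_const _)).sub hfBm
  have hhbd : ∀ b z, ‖h b z‖ ≤ 2 := by
    intro b z
    calc ‖h b z‖ ≤ ‖f (z + (b:A))‖ + ‖fB z‖ := norm_sub_le _ _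
      _ ≤ 1 + 1 := add_le_add (hbd _) (hfBbd _)
      _ = 2 := by norm_num
  have hhprodm : Measurable (fun p : B × A => h p.1 p.2) :=
    (hf.comp (measurable_snd.add (hcoe.comp measurable_fst))).sub (hfBm.comp measurable_snd)
  -- translate integrable in `b`
  have htint : ∀ z, Integrable (fun b : B => f (z + (b:A))) ν := by
    intro z
    exact (integrable_const (1:ℝ)).mono'
      ((hf.comp (measurable_const.add hcoe)).aestronglyMeasurable)
      (Filter.Eventually.of_forall fun b => hbd _)
  have hhint : ∀ z, Integrable (fun b : B => h b z) ν :=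
    fun z => (htint z).sub (integrable_const _)
  have hzero : ∀ z, ∫ b : B, h b z ∂ν = 0 := by
    intro z
    rw [hhdef]
    simp only
    rw [integral_sub (htint z) (integrable_const _), integral_const]
    simp [hfBdef]
  have hconjm : Measurable (starRingEnd ℂ) := RCLike.continuous_conj.measurable
  -- expansion of the square norm
  have hexp : ∀ u v : ℂ, ‖u + v‖ ^ 2 = ‖u‖ ^ 2 + ‖v‖ ^ 2
      + 2 * (u * (starRingEnd ℂ) v).re := by
    intro u v
    simp only [Complex.sq_norm]
    exact Complex.normSq_add u v
  -- Key claim, by induction on n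
  have key : ∀ n : ℕ, ∃ a : Fin n → B,
      ∫ z, ‖∑ i, h (a i) z‖ ^ 2 ∂μ ≤ 4 * n := by
    intro n
    induction n with
    | zero => exact ⟨Fin.elim0, by simp⟩
    | succ n ih =>
      obtain ⟨a, ha⟩ := ih
      set S : A → ℂ := fun z => ∑ i, h (a i) z with hSdef
      have hSm : Measurable S := by
        apply Finset.measurable_sum
        intro i _
        exact hhm _
      have hSbd : ∀ z, ‖S z‖ ≤ 2 * n := by
        intro z
        calc ‖S z‖ ≤ ∑ i : Fin n, ‖h (a i) z‖ := norm_sum_le _ _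
          _ ≤ ∑ i : Fin n, 2 := Finset.sum_le_sum fun i _ => hhbd _ _
          _ = 2 * n := by simp [mul_comm]
      -- the function whose average over b we bound
      set G : B → ℝ := fun b => ∫ z, ‖S z + h b z‖ ^ 2 ∂μ with hGdef
      -- integrability on the product
      have hm2 : Measurable (fun p : B × A => ‖S p.2 + h p.1 p.2‖ ^ 2) :=
        (((hSm.comp measurable_snd).add hhprodm).norm.pow measurable_const)
      have hbd2 : ∀ p : B × A, ‖S p.2 + h p.1 p.2‖ ^ 2 ≤ (2 * n + 2) ^ 2 := by
        intro p
        have : ‖S p.2 + h p.1 p.2‖ ≤ 2 * n + 2 :=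
          (norm_add_le _ _).trans (add_le_add (hSbd _) (hhbd _ _))
        exact pow_le_pow_left₀ (norm_nonneg _) this 2
      have hint2 : Integrable (fun p : B × A => ‖S p.2 + h p.1 p.2‖ ^ 2) (ν.prod μ) := by
        refine (integrable_const ((2 * (n:ℝ) + 2) ^ 2)).mono' hm2.aestronglyMeasurable ?_
        refine Filter.Eventually.of_forall fun p => ?_
        rw [Real.norm_of_nonneg (by positivity)]
        exact hbd2 p
      have hGint : Integrable G ν := hint2.integral_prod_left
      -- individual integrability in z
      have hS2int : Integrable (fun z => ‖S z‖ ^ 2) μ := by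
        refine (integrable_const ((2 * (n:ℝ)) ^ 2)).mono'
          (hSm.norm.pow measurable_const).aestronglyMeasurable ?_
        refine Filter.Eventually.of_forall fun z => ?_
        rw [Real.norm_of_nonneg (by positivity)]
        exact pow_le_pow_left₀ (norm_nonneg _) (hSbd z) 2
      have hh2int : ∀ b, Integrable (fun z => ‖h b z‖ ^ 2) μ := by
        intro b
        refine (integrable_const (4:ℝ)).mono'
          ((hhm b).norm.pow measurable_const).aestronglyMeasurable ?_
        refine Filter.Eventually.of_forall fun z => ?_
        rw [Real.norm_of_nonneg (by positivity)]
        calc ‖h b z‖ ^ 2 ≤ 2 ^ 2 := pow_le_pow_left₀ (norm_nonneg _) (hhbd b z) 2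
          _ = 4 := by norm_num
      have hcrossm : Measurable (fun p : B × A => (S p.2 * (starRingEnd ℂ) (h p.1 p.2)).re) :=
        (((hSm.comp measurable_snd).mul (hconjm.comp hhprodm))).re
      have hcrossbd : ∀ p : B × A, ‖(S p.2 * (starRingEnd ℂ) (h p.1 p.2)).re‖ ≤ 2 * n * 2 := by
        intro p
        calc ‖(S p.2 * (starRingEnd ℂ) (h p.1 p.2)).re‖
            ≤ ‖S p.2 * (starRingEnd ℂ) (h p.1 p.2)‖ := Complex.abs_re_le_norm _
          _ = ‖S p.2‖ * ‖h p.1 p.2‖ := by rw [norm_mul, RCLike.norm_conj]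
          _ ≤ 2 * n * 2 :=
              mul_le_mul (hSbd _) (hhbd _ _) (norm_nonneg _) (by positivity)
      have hcrossint : Integrable (fun p : B × A => (S p.2 * (starRingEnd ℂ) (h p.1 p.2)).re)
          (ν.prod μ) :=
        (integrable_const (2 * (n:ℝ) * 2)).mono' hcrossm.aestronglyMeasurable
          (Filter.Eventually.of_forall hcrossbd)
      have hcrossintz : ∀ b, Integrable (fun z => (S z * (starRingEnd ℂ) (h b z)).re) μ := by
        intro b
        refine (integrable_const (2 * (n:ℝ) * 2)).mono'
          ((hSm.mul (hconjm.comp (hhm b))).re).aestronglyMeasurable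
          (Filter.Eventually.of_forall fun z => hcrossbd (b, z))
      -- cross term vanishes after averaging over b
      have hcross : ∫ b : B, ∫ z, (S z * (starRingEnd ℂ) (h b z)).re ∂μ ∂ν = 0 := by
        rw [integral_integral_swap hcrossint]
        have : ∀ z, ∫ b : B, (S z * (starRingEnd ℂ) (h b z)).re ∂ν = 0 := by
          intro z
          have hintb : Integrable (fun b : B => S z * (starRingEnd ℂ) (h b z)) ν := by
            refine (integrable_const (2 * (n:ℝ) * 2)).mono'
              ((measurable_const.mul (hconjm.comp
                ((hf.comp (measurable_const.add hcoe)).sub measurable_const))).aestronglyMeasurable)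
              (Filter.Eventually.of_forall fun b => by
                rw [norm_mul, RCLike.norm_conj]
                exact mul_le_mul (hSbd _) (hhbd _ _) (norm_nonneg _) (by positivity))
          have h0 : ∫ b : B, S z * (starRingEnd ℂ) (h b z) ∂ν = 0 := by
            rw [integral_const_mul, integral_conj, hzero z]
            simp
          calc ∫ b : B, (S z * (starRingEnd ℂ) (h b z)).re ∂ν
              = (∫ b : B, S z * (starRingEnd ℂ) (h b z) ∂ν).re := integral_re hintb
            _ = 0 := by rw [h0]; simp
        simp only [this, integral_zero]
      -- average of G over b
      have hGavg : ∫ b : B, G b ∂ν ≤ 4 * (n + 1) := by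
        have hGeq : ∀ b : B, G b = (∫ z, ‖S z‖ ^ 2 ∂μ) + (∫ z, ‖h b z‖ ^ 2 ∂μ)
            + 2 * ∫ z, (S z * (starRingEnd ℂ) (h b z)).re ∂μ := by
          intro b
          rw [hGdef]
          simp only
          calc ∫ z, ‖S z + h b z‖ ^ 2 ∂μ
              = ∫ z, (‖S z‖ ^ 2 + ‖h b z‖ ^ 2 + 2 * (S z * (starRingEnd ℂ) (h b z)).re) ∂μ := by
                exact integral_congr_ae (Filter.Eventually.of_forall fun z => hexp _ _)
            _ = (∫ z, ‖S z‖ ^ 2 ∂μ) + (∫ z, ‖h b z‖ ^ 2 ∂μ)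
                + 2 * ∫ z, (S z * (starRingEnd ℂ) (h b z)).re ∂μ := by
                have i1 : Integrable (fun z => ‖S z‖ ^ 2 + ‖h b z‖ ^ 2) μ :=
                  hS2int.add (hh2int b)
                have i2 : Integrable (fun z => 2 * (S z * (starRingEnd ℂ) (h b z)).re) μ :=
                  (hcrossintz b).const_mul 2
                rw [integral_add i1 i2, integral_add hS2int (hh2int b), integral_const_mul]
        have hint4 : Integrable (fun b : B => ∫ z, ‖h b z‖ ^ 2 ∂μ) ν := by
          have : Integrable (fun p : B × A => ‖h p.1 p.2‖ ^ 2) (ν.prod μ) := by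
            refine (integrable_const (4:ℝ)).mono'
              (hhprodm.norm.pow measurable_const).aestronglyMeasurable ?_
            refine Filter.Eventually.of_forall fun p => ?_
            rw [Real.norm_of_nonneg (by positivity)]
            calc ‖h p.1 p.2‖ ^ 2 ≤ 2 ^ 2 := pow_le_pow_left₀ (norm_nonneg _) (hhbd _ _) 2
              _ = 4 := by norm_num
          exact this.integral_prod_left
        have hintcrossb : Integrable (fun b : B => ∫ z, (S z * (starRingEnd ℂ) (h b z)).re ∂μ) ν :=
          hcrossint.integral_prod_left
        calc ∫ b : B, G b ∂ν
            = ∫ b : B, ((∫ z, ‖S z‖ ^ 2 ∂μ) + (∫ z, ‖h b z‖ ^ 2 ∂μ)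
              + 2 * ∫ z, (S z * (starRingEnd ℂ) (h b z)).re ∂μ) ∂ν :=
              integral_congr_ae (Filter.Eventually.of_forall hGeq)
          _ = (∫ z, ‖S z‖ ^ 2 ∂μ) + (∫ b : B, ∫ z, ‖h b z‖ ^ 2 ∂μ ∂ν)
              + 2 * ∫ b : B, ∫ z, (S z * (starRingEnd ℂ) (h b z)).re ∂μ ∂ν := by
              have j1 : Integrable (fun b : B => (∫ z, ‖S z‖ ^ 2 ∂μ) + ∫ z, ‖h b z‖ ^ 2 ∂μ) ν :=
                (integrable_const _).add hint4
              have j2 : Integrable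
                  (fun b : B => 2 * ∫ z, (S z * (starRingEnd ℂ) (h b z)).re ∂μ) ν :=
                hintcrossb.const_mul 2
              rw [integral_add j1 j2, integral_add (integrable_const _) hint4, integral_const,
                integral_const_mul]
              simp
          _ = (∫ z, ‖S z‖ ^ 2 ∂μ) + (∫ b : B, ∫ z, ‖h b z‖ ^ 2 ∂μ ∂ν) := by
              rw [hcross]; ring
          _ ≤ 4 * n + 4 := by
              have h1 : ∫ b : B, ∫ z, ‖h b z‖ ^ 2 ∂μ ∂ν ≤ 4 := by
                calc ∫ b : B, ∫ z, ‖h b z‖ ^ 2 ∂μ ∂ν ≤ ∫ (_ : B), (4:ℝ) ∂ν := by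
                      refine integral_mono hint4 (integrable_const _) fun b => ?_
                      calc ∫ z, ‖h b z‖ ^ 2 ∂μ ≤ ∫ (_ : A), (4:ℝ) ∂μ := by
                            refine integral_mono (hh2int b) (integrable_const _) fun z => ?_
                            calc ‖h b z‖ ^ 2 ≤ 2 ^ 2 :=
                                  pow_le_pow_left₀ (norm_nonneg _) (hhbd _ _) 2
                              _ = 4 := by norm_num
                        _ = 4 := by simp
                  _ = 4 := by simp
              linarith [ha]
          _ = 4 * (n + 1) := by ring
      obtain ⟨b, hb⟩ := exists_le_integral hGint
      refine ⟨(Fin.snoc a b : Fin (n+1) → B), ?_⟩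
      have : ∀ z, ∑ i : Fin (n+1), h ((Fin.snoc a b : Fin (n+1) → B) i) z = S z + h b z := by
        intro z
        rw [Fin.sum_univ_castSucc]
        simp [hSdef, Fin.snoc_castSucc, Fin.snoc_last]
      calc ∫ z, ‖∑ i : Fin (n+1), h ((Fin.snoc a b : Fin (n+1) → B) i) z‖ ^ 2 ∂μ
          = G b := by
            rw [hGdef]
            refine integral_congr_ae (Filter.Eventually.of_forall fun z => ?_)
            dsimp only
            rw [this z]
        _ ≤ ∫ b : B, G b ∂ν := hb
        _ ≤ 4 * (n + 1) := hGavg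
        _ = 4 * ((n:ℕ)+1 : ℕ) := by push_cast; ring
  -- choose n
  set n : ℕ := ⌈4 / ε ^ 2⌉₊ with hndef
  have hn0 : 0 < n := Nat.ceil_pos.mpr (by positivity)
  have hn0' : (0:ℝ) < n := by exact_mod_cast hn0
  have hn1 : (n : ℝ) ≤ 1 + 4 / ε ^ 2 := by
    have := Nat.ceil_lt_add_one (show (0:ℝ) ≤ 4 / ε ^ 2 by positivity)
    rw [hndef]
    linarith
  have hle : 4 / ε ^ 2 ≤ (n : ℝ) := Nat.le_ceil _
  have hn2 : 4 / (n : ℝ) ≤ ε ^ 2 := by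
    rw [div_le_iff₀ hn0']
    rw [div_le_iff₀ (by positivity : (0:ℝ) < ε ^ 2)] at hle
    linarith
  obtain ⟨a, ha⟩ := key n
  refine ⟨n, hn0, hn1, a, ?_⟩
  set g : A → ℂ := fun z => fB z - (1 / n : ℂ) * ∑ i, f (z + (a i : A)) with hgdef
  have hnC : (n : ℂ) ≠ 0 := by exact_mod_cast hn0.ne'
  have herr : ∀ z, g z = -((1 / n : ℂ) * ∑ i, h (a i) z) := by
    intro z
    rw [hgdef, hhdef]
    simp only
    rw [Finset.sum_sub_distrib, Finset.sum_const, Finset.card_univ, Fintype.card_fin]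
    field_simp
    ring
  have hgm : Measurable g := by
    refine hfBm.sub (measurable_const.mul ?_)
    exact Finset.measurable_sum _ fun i _ => hf.comp (measurable_id.add_const _)
  have hgbd : ∀ z, ‖g z‖ ≤ 2 := by
    intro z
    rw [herr z, norm_neg, norm_mul]
    calc ‖(1 / n : ℂ)‖ * ‖∑ i, h (a i) z‖ ≤ (1 / n) * (2 * n) := by
          refine mul_le_mul ?_ ?_ (norm_nonneg _) (by positivity)
          · rw [norm_div, norm_one]
            simp only [Complex.norm_natCast]
            exact le_rfl
          · exact (norm_sum_le _ _).trans (by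
              calc ∑ i : Fin n, ‖h (a i) z‖ ≤ ∑ i : Fin n, 2 :=
                    Finset.sum_le_sum fun i _ => hhbd _ _
                _ = 2 * n := by simp [mul_comm])
      _ = 2 := by field_simp
  have hg2int : Integrable (fun z => ‖g z‖ ^ 2) μ := by
    refine (integrable_const (4:ℝ)).mono'
      (hgm.norm.pow measurable_const).aestronglyMeasurable ?_
    refine Filter.Eventually.of_forall fun z => ?_
    rw [Real.norm_of_nonneg (by positivity)]
    calc ‖g z‖ ^ 2 ≤ 2 ^ 2 := pow_le_pow_left₀ (norm_nonneg _) (hgbd z) 2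
      _ = 4 := by norm_num
  have hgint : ∫ z, ‖g z‖ ^ 2 ∂μ ≤ ε ^ 2 := by
    have heq : ∀ z, ‖g z‖ ^ 2 = (1 / (n:ℝ)) ^ 2 * ‖∑ i, h (a i) z‖ ^ 2 := by
      intro z
      rw [herr z, norm_neg, norm_mul, mul_pow]
      congr 2
      rw [norm_div, norm_one]
      simp only [Complex.norm_natCast]
    calc ∫ z, ‖g z‖ ^ 2 ∂μ
        = (1 / (n:ℝ)) ^ 2 * ∫ z, ‖∑ i, h (a i) z‖ ^ 2 ∂μ := by
          rw [← integral_const_mul]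
          exact integral_congr_ae (Filter.Eventually.of_forall heq)
      _ ≤ (1 / (n:ℝ)) ^ 2 * (4 * n) := by
          refine mul_le_mul_of_nonneg_left ha (by positivity)
      _ = 4 / n := by field_simp
      _ ≤ ε ^ 2 := hn2
  -- convert to eLpNorm
  show eLpNorm g 2 μ ≤ ENNReal.ofReal ε
  rw [eLpNorm_eq_lintegral_rpow_enorm_toReal (by norm_num) (by norm_num)]
  have htoReal : (2 : ℝ≥0∞).toReal = (2:ℝ) := by norm_num
  rw [htoReal]
  have hlint : ∫⁻ z, ‖g z‖ₑ ^ (2:ℝ) ∂μ = ENNReal.ofReal (∫ z, ‖g z‖ ^ 2 ∂μ) := by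
    rw [ofReal_integral_eq_lintegral_ofReal hg2int
      (Filter.Eventually.of_forall fun z => by positivity)]
    refine lintegral_congr fun z => ?_
    rw [← ofReal_norm,
      ENNReal.ofReal_rpow_of_nonneg (norm_nonneg _) (by norm_num : (0:ℝ) ≤ 2)]
    congr 1
    rw [← Real.rpow_natCast ‖g z‖ 2]
    norm_num
  rw [hlint]
  calc (ENNReal.ofReal (∫ z, ‖g z‖ ^ 2 ∂μ)) ^ (1 / (2:ℝ))
      ≤ (ENNReal.ofReal (ε ^ 2)) ^ (1 / (2:ℝ)) :=
        ENNReal.rpow_le_rpow (ENNReal.ofReal_le_ofReal hgint) (by norm_num)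
    _ = ENNReal.ofReal ε := by
        rw [ENNReal.ofReal_pow hε.le, ← ENNReal.rpow_natCast, ← ENNReal.rpow_mul]
        norm_num
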